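/- Let V be a valuation domain. If for all nonzero a, b in the Jacobson radical there exists k with a ∣ b^k, and invertibility is decidable (the residual field is discrete), then V has Krull dimension at most 1. -/
import Mathlib


/-- An archimedean valuation domain with discrete residual field has Krull dimension
at most 1. -/
theorem archimedean_valuation_domain_dim_le_one (V : Type*) [CommRing V] [IsDomain V]
    (hval : ∀ a b : V, a ∣ b ∨ b ∣ a)
    (harch : ∀ a b : V, a ∈ Ideal.jacobson (⊥ : Ideal V) → b ∈ Ideal.jacobson (⊥ : Ideal V) →
      a ≠ 0 → b ≠ 0 → ∃ k : ℕ, a ∣ b ^ k)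
    (hres : ∀ x : V, IsUnit x ∨ x ∈ Ideal.jacobson (⊥ : Ideal V)) :
    ∀ a b : V, ∃ (k l : ℕ) (x y : V), b ^ l * (a ^ k * (a * x - 1) + b * y) = 0 := by
  intro a b
  rcases hres a with ha | ha
  · obtain ⟨x, hx⟩ := ha.exists_right_inv
    exact ⟨0, 0, x, 0, by simp [hx]⟩
  by_cases ha0 : a = 0
  · exact ⟨1, 0, 0, 0, by simp [ha0]⟩
  by_cases hb0 : b = 0
  · exact ⟨0, 1, 0, 0, by simp [hb0]⟩
  rcases hres b with hb | hb
  · obtain ⟨c, hc⟩ := hb.exists_right_inv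
    exact ⟨0, 0, 0, c, by simp [hc]⟩
  · obtain ⟨k, c, hc⟩ := harch b a hb ha hb0 ha0
    exact ⟨k, 0, 0, c, by simp [hc]⟩
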